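/- Consider a hedonic diversity game in which all agents have strict and naturally single-peaked preferences, and a sequence of IS deviations π_0, π_1, …, π_K starting from the singleton partition π_0 in which every deviation satisfies solitary homogeneity. For an agent i, let the peak p_i denote the unique ≿_i-maximal ratio. Then for every k: every red agent r with p_r ≥ 1/2 satisfies |R ∩ π_k(r)|/|π_k(r)| ≥ 1/2, and every blue agent b with p_b ≤ 1/2 satisfies |R ∩ π_k(b)|/|π_k(b)| ≤ 1/2. -/
import Mathlib


/-- A partition of the agent set `A`, encoded by the map sending each agent to
the coalition containing it. -/
def IsPartition {A : Type*} [DecidableEq A] (π : A → Finset A) : Prop :=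
  (∀ i, i ∈ π i) ∧ ∀ i j, i ∈ π j → π i = π j

/-- Strict part of a weak preference relation `r`. -/
def StrictPref {α : Type*} (r : α → α → Prop) (x y : α) : Prop :=
  r x y ∧ ¬ r y x

/-- `π'` is obtained from `π` by an IS deviation of agent `i`, where
`wp j C D` means that agent `j` weakly prefers coalition `C` to coalition `D`. -/
def IsISDeviation {A : Type*} [DecidableEq A]
    (wp : A → Finset A → Finset A → Prop) (π π' : A → Finset A) (i : A) : Prop :=
  π' i ≠ π i ∧
  (∀ j, j ≠ i → (π' j).erase i = (π j).erase i) ∧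
  StrictPref (wp i) (π' i) (π i) ∧
  ∀ j ∈ (π' i).erase i, wp j (π' j) (π j)

/-- One step of the dynamics of IS deviations between partitions. -/
def ISStep {A : Type*} [DecidableEq A]
    (wp : A → Finset A → Finset A → Prop) (π π' : A → Finset A) : Prop :=
  IsPartition π ∧ IsPartition π' ∧ ∃ i, IsISDeviation wp π π' i

/-- A partition is individually stable if no IS deviation from it is possible. -/
def IndividuallyStable {A : Type*} [DecidableEq A]
    (wp : A → Finset A → Finset A → Prop) (π : A → Finset A) : Prop :=
  IsPartition π ∧ ∀ π' : A → Finset A, ¬ ISStep wp π π'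

/-- `r` is a weak order (total preorder) on the set `S`. -/
def WeakOrderOn {α : Type*} (r : α → α → Prop) (S : Set α) : Prop :=
  (∀ x ∈ S, ∀ y ∈ S, r x y ∨ r y x) ∧
  ∀ x ∈ S, ∀ y ∈ S, ∀ z ∈ S, r x y → r y z → r x z

/-- `r` is antisymmetric on `S`, i.e. the preferences are strict. -/
def StrictPrefsOn {α : Type*} (r : α → α → Prop) (S : Set α) : Prop :=
  ∀ x ∈ S, ∀ y ∈ S, r x y → r y x → x = y

/-- `r` is (naturally) single-peaked on `S` with respect to the natural linear
order of `α`: whenever `y` lies strictly between `x` and `z`, `x ≻ y` implies `y ≿ z`. -/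
def SinglePeakedOn {α : Type*} [LinearOrder α] (r : α → α → Prop) (S : Set α) : Prop :=
  ∀ x ∈ S, ∀ y ∈ S, ∀ z ∈ S,
    ((x < y ∧ y < z) ∨ (z < y ∧ y < x)) → StrictPref r x y → r y z

/-- The fraction of red agents (members of `R`) in the coalition `C`. -/
def redRatio {A : Type*} [DecidableEq A] (R : Finset A) (C : Finset A) : ℚ :=
  ((R ∩ C).card : ℚ) / (C.card : ℚ)

/-- The set of ratios `p/q` with `0 ≤ p ≤ r` and `1 ≤ q ≤ n`. -/
def RatioSet (r n : ℕ) : Set ℚ :=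
  {x : ℚ | ∃ p q : ℕ, p ≤ r ∧ 1 ≤ q ∧ q ≤ n ∧ x = (p : ℚ) / (q : ℚ)}

/-- Coalition preferences of a hedonic diversity game with red agents `R`:
coalitions are compared by their fraction of red agents via the ratio
preferences `rp`. -/
def hdgPref {A : Type*} [DecidableEq A] (R : Finset A) (rp : A → ℚ → ℚ → Prop) :
    A → Finset A → Finset A → Prop :=
  fun i C D => rp i (redRatio R C) (redRatio R D)

/-- A coalition is homogeneous if it consists only of red agents or only of
blue agents. -/
def HomogeneousCoalition {A : Type*} [DecidableEq A] (R : Finset A) (C : Finset A) : Prop :=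
  C ⊆ R ∨ ∀ a ∈ C, a ∉ R

/-- One step of the dynamics of IS deviations in a hedonic diversity game in
which the deviation satisfies solitary homogeneity: if the target coalition of
the deviator is homogeneous, then it is a singleton. -/
def ISStepSH {A : Type*} [DecidableEq A] (R : Finset A) (rp : A → ℚ → ℚ → Prop)
    (π π' : A → Finset A) : Prop :=
  IsPartition π ∧ IsPartition π' ∧
  ∃ i, IsISDeviation (hdgPref R rp) π π' i ∧
    (HomogeneousCoalition R (π' i) → (π' i).card = 1)
set_option linter.unusedSectionVars false
section HDGAux

variable {A : Type} [Fintype A] [DecidableEq A]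

section Pref

variable {r : ℚ → ℚ → Prop} {S : Set ℚ} {pk : ℚ}

lemma pref_refl (hwo : WeakOrderOn r S) {x : ℚ} (hx : x ∈ S) : r x x :=
  (hwo.1 x hx x hx).elim id id

lemma pref_trans (hwo : WeakOrderOn r S) {x y z : ℚ} (hx : x ∈ S) (hy : y ∈ S) (hz : z ∈ S)
    (h1 : r x y) (h2 : r y z) : r x z := hwo.2 x hx y hy z hz h1 h2

lemma pref_above (hwo : WeakOrderOn r S) (hstrict : StrictPrefsOn r S) (hsp : SinglePeakedOn r S)
    (hpkS : pk ∈ S) (hpk : ∀ x ∈ S, r pk x) {u v : ℚ} (hu : u ∈ S) (hv : v ∈ S)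
    (hpu : pk ≤ u) (huv : u < v) : r u v := by
  rcases eq_or_lt_of_le hpu with h | h
  · rw [← h]; exact hpk v hv
  rcases hwo.1 u hu v hv with h' | h'
  · exact h'
  by_cases hq : r u v
  · exact hq
  have h2 : r u pk := hsp v hv u hu pk hpkS (Or.inr ⟨h, huv⟩) ⟨h', hq⟩
  exact absurd (hstrict u hu pk hpkS h2 (hpk u hu)) (ne_of_gt h)

lemma pref_below (hwo : WeakOrderOn r S) (hstrict : StrictPrefsOn r S) (hsp : SinglePeakedOn r S)
    (hpkS : pk ∈ S) (hpk : ∀ x ∈ S, r pk x) {u v : ℚ} (hu : u ∈ S) (hv : v ∈ S)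
    (hup : u ≤ pk) (hvu : v < u) : r u v := by
  rcases eq_or_lt_of_le hup with h | h
  · rw [h]; exact hpk v hv
  rcases hwo.1 u hu v hv with h' | h'
  · exact h'
  by_cases hq : r u v
  · exact hq
  have h2 : r u pk := hsp v hv u hu pk hpkS (Or.inl ⟨hvu, h⟩) ⟨h', hq⟩
  exact absurd (hstrict u hu pk hpkS h2 (hpk u hu)) (ne_of_lt h)

lemma peak_lt (hwo : WeakOrderOn r S) (hstrict : StrictPrefsOn r S) (hsp : SinglePeakedOn r S)
    (hpkS : pk ∈ S) (hpk : ∀ x ∈ S, r pk x) {a b : ℚ} (ha : a ∈ S) (hb : b ∈ S)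
    (hab : r a b) (hlt : a < b) : pk < b := by
  by_contra hc
  push_neg at hc
  exact (ne_of_lt hlt) (hstrict a ha b hb hab (pref_below hwo hstrict hsp hpkS hpk hb ha hc hlt))

lemma lt_peak (hwo : WeakOrderOn r S) (hstrict : StrictPrefsOn r S) (hsp : SinglePeakedOn r S)
    (hpkS : pk ∈ S) (hpk : ∀ x ∈ S, r pk x) {a b : ℚ} (ha : a ∈ S) (hb : b ∈ S)
    (hab : r a b) (hlt : b < a) : b < pk := by
  by_contra hc
  push_neg at hc
  exact (ne_of_gt hlt) (hstrict a ha b hb hab (pref_above hwo hstrict hsp hpkS hpk hb ha hc hlt))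

end Pref

lemma card_split (R C : Finset A) : (R ∩ C).card + (C \ R).card = C.card := by
  rw [Finset.inter_comm]
  exact Finset.card_inter_add_card_sdiff C R

lemma redRatio_mem (R C : Finset A) (hC : C.Nonempty) :
    redRatio R C ∈ RatioSet R.card (Fintype.card A) :=
  ⟨(R ∩ C).card, C.card, Finset.card_le_card Finset.inter_subset_left, hC.card_pos,
    le_trans (Finset.card_le_univ C) (le_of_eq Finset.card_univ), rfl⟩

lemma redRatio_red1 {R C : Finset A} (h : (R ∩ C).card = 1) :
    redRatio R C = 1 / (C.card : ℚ) := by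
  unfold redRatio; rw [h]; norm_num

lemma redRatio_blue1 {R C : Finset A} (h : (C \ R).card = 1) :
    redRatio R C = ((C.card : ℚ) - 1) / (C.card : ℚ) := by
  have hs := card_split R C
  have h2 : 1 ≤ C.card := by omega
  have h1 : (R ∩ C).card = C.card - 1 := by omega
  unfold redRatio
  rw [h1, Nat.cast_sub h2, Nat.cast_one]

lemma inter_erase' (R C : Finset A) (i : A) : R ∩ C.erase i = (R ∩ C).erase i := by
  ext a
  simp only [Finset.mem_inter, Finset.mem_erase]
  tauto

lemma sdiff_erase' (R C : Finset A) (i : A) : (C.erase i) \ R = (C \ R).erase i := by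
  ext a
  simp only [Finset.mem_sdiff, Finset.mem_erase]
  tauto

lemma inter_insert_mem {R C : Finset A} {i : A} (hiR : i ∈ R) :
    R ∩ insert i C = insert i (R ∩ C) := by
  rw [Finset.inter_comm, Finset.insert_inter_of_mem hiR, Finset.inter_comm]

lemma inter_insert_notmem {R C : Finset A} {i : A} (hiR : i ∉ R) :
    R ∩ insert i C = R ∩ C := by
  rw [Finset.inter_comm, Finset.insert_inter_of_notMem hiR, Finset.inter_comm]

lemma sdiff_insert_mem {R C : Finset A} {i : A} (hiR : i ∈ R) :
    (insert i C) \ R = C \ R := by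
  ext a
  simp only [Finset.mem_sdiff, Finset.mem_insert]
  constructor
  · rintro ⟨rfl | h, hr⟩
    · exact absurd hiR hr
    · exact ⟨h, hr⟩
  · rintro ⟨h, hr⟩
    exact ⟨Or.inr h, hr⟩

lemma sdiff_insert_notmem {R C : Finset A} {i : A} (hiR : i ∉ R) :
    (insert i C) \ R = insert i (C \ R) := by
  ext a
  simp only [Finset.mem_sdiff, Finset.mem_insert]
  constructor
  · rintro ⟨rfl | h, hr⟩
    · exact Or.inl rfl
    · exact Or.inr ⟨h, hr⟩
  · rintro (rfl | ⟨h, hr⟩)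
    · exact ⟨Or.inl rfl, hiR⟩
    · exact ⟨Or.inr h, hr⟩

/-- The invariant clauses for a single coalition. -/
def GoodCo (R : Finset A) (rp : A → ℚ → ℚ → Prop) (D : Finset A) : Prop :=
  (2 ≤ D.card → (1 ≤ (R ∩ D).card ∧ 1 ≤ (D \ R).card ∧
      ((R ∩ D).card = 1 ∨ (D \ R).card = 1))) ∧
  ((R ∩ D).card = 1 → 3 ≤ D.card → ∀ d ∈ R ∩ D,
      ∀ y ∈ RatioSet R.card (Fintype.card A), 1 / ((D.card : ℚ) - 1) ≤ y →
        rp d (redRatio R D) y) ∧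
  ((D \ R).card = 1 → 3 ≤ D.card → ∀ d ∈ D \ R,
      ∀ y ∈ RatioSet R.card (Fintype.card A), y ≤ 1 - 1 / ((D.card : ℚ) - 1) →
        rp d (redRatio R D) y)

/-- The inductive invariant along the dynamics. -/
def InvP (R : Finset A) (rp : A → ℚ → ℚ → Prop) (π : A → Finset A) : Prop :=
  ∀ a : A, GoodCo R rp (π a)

lemma good_small {R : Finset A} {rp : A → ℚ → ℚ → Prop} {D : Finset A}
    (h : D.card ≤ 1) : GoodCo R rp D :=
  ⟨fun h2 => absurd h2 (by omega), fun _ h3 => absurd h3 (by omega),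
    fun _ h3 => absurd h3 (by omega)⟩

lemma good_two {R : Finset A} {rp : A → ℚ → ℚ → Prop} {D : Finset A}
    (h : D.card = 2) (h1 : 1 ≤ (R ∩ D).card) (h2 : 1 ≤ (D \ R).card) : GoodCo R rp D := by
  have := card_split R D
  exact ⟨fun _ => ⟨h1, h2, by omega⟩, fun _ h3 => absurd h3 (by omega),
    fun _ h3 => absurd h3 (by omega)⟩

end HDGAux

section QFacts

lemma q_half_le {s : ℚ} (h : 2 ≤ s) : 1/2 ≤ (s-1)/s := by
  rw [div_le_div_iff₀ (by norm_num) (by linarith)]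
  linarith

lemma q_le_half {s : ℚ} (h : 2 ≤ s) : 1/s ≤ 1/2 := by
  rw [div_le_div_iff₀ (by linarith) (by norm_num)]
  linarith

lemma q_blue_lt {s : ℚ} (h : 1 ≤ s) : (s-1)/s < s/(s+1) := by
  rw [div_lt_div_iff₀ (by linarith) (by linarith)]
  nlinarith

lemma q_red_lt {s : ℚ} (h : 1 ≤ s) : 1/(s+1) < 1/s := by
  rw [div_lt_div_iff₀ (by linarith) (by linarith)]
  linarith

lemma q_bound_red {s : ℚ} (h : 3 ≤ s) : 1/(s-1) ≤ 2/(s+1) := by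
  rw [div_le_div_iff₀ (by linarith) (by linarith)]
  linarith

lemma q_ne_red {s : ℚ} (h : 3 ≤ s) : 2/(s+1) ≠ 1/s := by
  intro he
  rw [div_eq_div_iff (by linarith) (by linarith)] at he
  linarith

lemma q_bound_blue {s : ℚ} (h : 3 ≤ s) : (s-1)/(s+1) ≤ 1 - 1/(s-1) := by
  have h1 : 1 - 1/(s-1) = (s-2)/(s-1) := by
    have hne : s - 1 ≠ 0 := by linarith
    field_simp
    ring
  rw [h1, div_le_div_iff₀ (by linarith) (by linarith)]
  nlinarith

lemma q_ne_blue {s : ℚ} (h : 3 ≤ s) : (s-1)/(s+1) ≠ (s-1)/s := by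
  intro he
  rw [div_eq_div_iff (by linarith) (by linarith)] at he
  nlinarith

lemma q_one_sub {s : ℚ} (h : 1 ≤ s) : 1 - 1/s = (s-1)/s := by
  have hne : s ≠ 0 := by linarith
  field_simp

end QFacts

lemma q_inv_lt {a b : ℚ} (h0 : 0 < a) (hab : a < b) : 1/b < 1/a := by
  rw [div_lt_div_iff₀ (by linarith) h0]
  linarith

lemma q_blue_lt2 {s : ℚ} (h : 3 ≤ s) : 1 - 1/(s-1) < (s-1)/s := by
  have h1 : 1 - 1/(s-1) = (s-2)/(s-1) := by
    have hne : s - 1 ≠ 0 := by linarith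
    field_simp
    ring
  rw [h1, div_lt_div_iff₀ (by linarith) (by linarith)]
  nlinarith

lemma q_blue_chain {s : ℚ} (h : 4 ≤ s) : 1 - 1/(s-2) < (s-2)/(s-1) := by
  have h1 : 1 - 1/(s-2) = (s-3)/(s-2) := by
    have hne : s - 2 ≠ 0 := by linarith
    field_simp
    ring
  rw [h1, div_lt_div_iff₀ (by linarith) (by linarith)]
  nlinarith
set_option linter.unusedSectionVars false
set_option maxHeartbeats 1000000

section HDGStep

variable {A : Type} [Fintype A] [DecidableEq A]

lemma step_inv (R : Finset A) (rp : A → ℚ → ℚ → Prop)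
    (hwo : ∀ i, WeakOrderOn (rp i) (RatioSet R.card (Fintype.card A)))
    (hstrict : ∀ i, StrictPrefsOn (rp i) (RatioSet R.card (Fintype.card A)))
    (hsp : ∀ i, SinglePeakedOn (rp i) (RatioSet R.card (Fintype.card A)))
    (p : A → ℚ)
    (hpeak : ∀ i, p i ∈ RatioSet R.card (Fintype.card A) ∧
      ∀ x ∈ RatioSet R.card (Fintype.card A), rp i (p i) x)
    (π π' : A → Finset A) (h : ISStepSH R rp π π')
    (hI : InvP R rp π) : InvP R rp π' := by
  obtain ⟨hπ, hπ', i, hdev, hSH⟩ := h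
  obtain ⟨hne, herase, hstr, hcons⟩ := hdev
  have hstr' : rp i (redRatio R (π' i)) (redRatio R (π i)) ∧
      ¬ rp i (redRatio R (π i)) (redRatio R (π' i)) := hstr
  set N := π' i with hN
  set O := π i with hO
  have hiN : i ∈ N := hπ'.1 i
  have hiO : i ∈ O := hπ.1 i
  set C := N.erase i with hC
  have hiC : i ∉ C := Finset.notMem_erase i N
  have hNins : N = insert i C := (Finset.insert_erase hiN).symm
  have hsN : N.card = C.card + 1 := by
    rw [hNins, Finset.card_insert_of_notMem hiC]
  have hmemC : ∀ j ∈ C, π j = C ∧ π' j = N := by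
    intro j hj
    obtain ⟨hjne, hjN⟩ := Finset.mem_erase.mp hj
    have hπ'j : π' j = N := hπ'.2 j i hjN
    have he : C = (π j).erase i := by
      rw [hC, ← hπ'j]
      exact herase j hjne
    have hiπj : i ∉ π j := by
      intro hij
      have h1 : π i = π j := hπ.2 i j hij
      apply hne
      rw [hNins, he, ← h1, ← hO, Finset.insert_erase hiO]
    constructor
    · rw [he, Finset.erase_eq_of_notMem hiπj]
    · exact hπ'j
  have hOmem : ∀ j ∈ O, j ≠ i → π' j = O.erase i := by
    intro j hjO hjne
    have he := herase j hjne
    have hπj : π j = O := hπ.2 j i hjO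
    have hiπ'j : i ∉ π' j := by
      intro hij
      have h1 : π' i = π' j := hπ'.2 i j hij
      have hjN : j ∈ N := by rw [hN, h1]; exact hπ'.1 j
      have hjC : j ∈ C := Finset.mem_erase.mpr ⟨hjne, hjN⟩
      have h2 := (hmemC j hjC).1
      rw [hπj] at h2
      exact hiC (h2 ▸ hiO)
    rw [← Finset.erase_eq_of_notMem hiπ'j, he, hπj]
  have hunch : ∀ a, a ∉ N → a ∉ O → π' a = π a := by
    intro a haN haO
    by_cases hai : a = i
    · subst hai; exact absurd hiN haN
    have he := herase a hai
    have h1 : i ∉ π a := fun hia => haO (by rw [hO, hπ.2 i a hia]; exact hπ.1 a)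
    have h2 : i ∉ π' a := fun hia => haN (by rw [hN, hπ'.2 i a hia]; exact hπ'.1 a)
    rw [← Finset.erase_eq_of_notMem h2, he, Finset.erase_eq_of_notMem h1]
  have hconsent : ∀ j ∈ C, rp j (redRatio R N) (redRatio R C) := by
    intro j hj
    have h2 : hdgPref R rp j (π' j) (π j) := hcons j hj
    rw [hdgPref, (hmemC j hj).1, (hmemC j hj).2] at h2
    exact h2
  have hNne : N.Nonempty := ⟨i, hiN⟩
  have hNmem : redRatio R N ∈ RatioSet R.card (Fintype.card A) := redRatio_mem R N hNne
  have hmainN : GoodCo R rp N ∧ (i ∈ R → 1/2 ≤ redRatio R N) ∧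
      (i ∉ R → redRatio R N ≤ 1/2) := by
    rcases Finset.eq_empty_or_nonempty C with hCe | hCne
    · have hNsing : N = {i} := by rw [hNins, hCe]; simp
      refine ⟨by rw [hNsing]; exact good_small (by simp), ?_, ?_⟩
      · intro hiR
        have h1 : R ∩ N = {i} := by
          rw [hNsing, Finset.inter_comm, Finset.singleton_inter_of_mem hiR]
        unfold redRatio
        rw [h1, hNsing]
        norm_num
      · intro hiR
        have h1 : R ∩ N = ∅ := by
          rw [hNsing, Finset.inter_comm, Finset.singleton_inter_of_notMem hiR]
        unfold redRatio
        rw [h1]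
        norm_num
    obtain ⟨x0, hx0⟩ := hCne
    have hCmem : redRatio R C ∈ RatioSet R.card (Fintype.card A) := redRatio_mem R C ⟨x0, hx0⟩
    have hsplitC := card_split R C
    have hsplitN := card_split R N
    have hiRC : i ∉ R ∩ C := fun hh => hiC (Finset.mem_of_mem_inter_right hh)
    have hiCR : i ∉ C \ R := fun hh => hiC ((Finset.mem_sdiff.mp hh).1)
    rcases Nat.lt_or_ge C.card 2 with hs1 | hs2
    · -- C is a singleton
      have hcard1 : C.card = 1 := by
        have : 1 ≤ C.card := Finset.card_pos.mpr ⟨x0, hx0⟩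
        omega
      obtain ⟨x, hx⟩ := Finset.card_eq_one.mp hcard1
      have hsN2 : N.card = 2 := by omega
      by_cases hxR : x ∈ R
      · by_cases hiR : i ∈ R
        · exfalso
          have hhom : HomogeneousCoalition R N := by
            left
            rw [hNins, hx]
            intro a ha
            rcases Finset.mem_insert.mp ha with rfl | ha'
            · exact hiR
            · rwa [Finset.mem_singleton.mp ha']
          have := hSH hhom
          omega
        · have h1 : R ∩ N = {x} := by
            rw [hNins, inter_insert_notmem hiR, hx, Finset.inter_comm,
              Finset.singleton_inter_of_mem hxR]
          have h2 : (R ∩ N).card = 1 := by rw [h1]; rfl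
          have hval : redRatio R N = 1/2 := by
            rw [redRatio_red1 h2, hsN2]
            norm_num
          exact ⟨good_two hsN2 (by omega) (by omega),
            fun hh => absurd hh hiR, fun _ => le_of_eq hval⟩
      · by_cases hiR : i ∈ R
        · have h0 : R ∩ {x} = ∅ := by
            rw [Finset.inter_comm, Finset.singleton_inter_of_notMem hxR]
          have h1 : R ∩ N = {i} := by
            rw [hNins, inter_insert_mem hiR, hx, h0]
            simp
          have h2 : (R ∩ N).card = 1 := by rw [h1]; rfl
          have hval : redRatio R N = 1/2 := by
            rw [redRatio_red1 h2, hsN2]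
            norm_num
          exact ⟨good_two hsN2 (by omega) (by omega),
            fun _ => ge_of_eq hval, fun hh => absurd hiR hh⟩
        · exfalso
          have hhom : HomogeneousCoalition R N := by
            right
            rw [hNins, hx]
            intro a ha
            rcases Finset.mem_insert.mp ha with rfl | ha'
            · exact hiR
            · rw [Finset.mem_singleton.mp ha']; exact hxR
          have := hSH hhom
          omega
    · -- C has at least two members
      have hGC : GoodCo R rp C := by have := hI x0; rwa [(hmemC x0 hx0).1] at this
      obtain ⟨hrC1, hbC1, hdisj⟩ := hGC.1 hs2
      have hsCQ : (2:ℚ) ≤ (C.card : ℚ) := by exact_mod_cast hs2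
      have hcastN : (N.card : ℚ) = (C.card : ℚ) + 1 := by rw [hsN]; push_cast; ring
      by_cases hiR : i ∈ R
      · by_cases hb1 : (C \ R).card = 1
        · -- many reds, one blue; the blue consents upwards
          have hNb : N \ R = C \ R := by rw [hNins]; exact sdiff_insert_mem hiR
          have hNr : (R ∩ N).card = (R ∩ C).card + 1 := by
            rw [hNins, inter_insert_mem hiR, Finset.card_insert_of_notMem hiRC]
          have hNb1 : (N \ R).card = 1 := by rw [hNb]; exact hb1
          have hθC : redRatio R C = ((C.card:ℚ)-1)/(C.card:ℚ) := redRatio_blue1 hb1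
          have hθN : redRatio R N = ((N.card:ℚ)-1)/(N.card:ℚ) := redRatio_blue1 hNb1
          have hbound : 1/2 ≤ redRatio R N := by
            rw [hθN]; exact q_half_le (by rw [hcastN]; linarith)
          refine ⟨⟨fun _ => ⟨by omega, by omega, Or.inr hNb1⟩, fun h1 _ => by omega, ?_⟩,
            fun _ => hbound, fun hh => absurd hiR hh⟩
          intro _ _ d hd y hy hyle
          have hdC : d ∈ C \ R := by rwa [hNb] at hd
          have hdCC : d ∈ C := (Finset.mem_sdiff.mp hdC).1
          have hcons' := hconsent d hdCC
          have hthr : 1 - 1/((N.card:ℚ)-1) = redRatio R C := by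
            rw [hθC, hcastN]
            have he1 : (C.card:ℚ) + 1 - 1 = (C.card:ℚ) := by ring
            rw [he1, q_one_sub (by linarith)]
          rw [hthr] at hyle
          rcases eq_or_lt_of_le hyle with he | hlt
          · rw [he]; exact hcons'
          · have hCNlt : redRatio R C < redRatio R N := by
              rw [hθC, hθN, hcastN]
              have he1 : (C.card:ℚ) + 1 - 1 = (C.card:ℚ) := by ring
              rw [he1]
              exact q_blue_lt (by linarith)
            have hpd : redRatio R C < p d :=
              lt_peak (hwo d) (hstrict d) (hsp d) (hpeak d).1 (hpeak d).2 hNmem hCmem hcons' hCNlt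
            exact pref_trans (hwo d) hNmem hCmem hy hcons'
              (pref_below (hwo d) (hstrict d) (hsp d) (hpeak d).1 (hpeak d).2 hCmem hy
                (le_of_lt hpd) hlt)
        · -- contradiction: a red agent cannot join a one-red coalition
          exfalso
          have hr1 : (R ∩ C).card = 1 := by
            rcases hdisj with hh | hh
            · exact hh
            · exact absurd hh hb1
          have hs3 : 3 ≤ C.card := by omega
          have hsCQ3 : (3:ℚ) ≤ (C.card:ℚ) := by exact_mod_cast hs3
          obtain ⟨d, hd⟩ := Finset.card_eq_one.mp hr1
          have hdmem : d ∈ R ∩ C := by rw [hd]; exact Finset.mem_singleton_self d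
          have hdC : d ∈ C := Finset.mem_of_mem_inter_right hdmem
          have hGd : GoodCo R rp C := by have := hI d; rwa [(hmemC d hdC).1] at this
          have hcons' := hconsent d hdC
          have hθC : redRatio R C = 1/(C.card:ℚ) := redRatio_red1 hr1
          have hNr : (R ∩ N).card = 2 := by
            rw [hNins, inter_insert_mem hiR, Finset.card_insert_of_notMem hiRC, hr1]
          have hθN : redRatio R N = 2/((C.card:ℚ)+1) := by
            unfold redRatio
            rw [hNr, hcastN]
            norm_num
          have hlock := hGd.2.1 hr1 hs3 d hdmem (redRatio R N) hNmem
            (by rw [hθN]; exact q_bound_red hsCQ3)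
          have heq := hstrict d (redRatio R N) hNmem (redRatio R C) hCmem hcons' hlock
          rw [hθN, hθC] at heq
          exact q_ne_red hsCQ3 heq
      · by_cases hr1 : (R ∩ C).card = 1
        · -- one red, many blues; the red consents downwards
          have hNr : R ∩ N = R ∩ C := by rw [hNins]; exact inter_insert_notmem hiR
          have hNr1 : (R ∩ N).card = 1 := by rw [hNr]; exact hr1
          have hNbc : (N \ R).card = (C \ R).card + 1 := by
            rw [hNins, sdiff_insert_notmem hiR, Finset.card_insert_of_notMem hiCR]
          have hθC : redRatio R C = 1/(C.card:ℚ) := redRatio_red1 hr1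
          have hθN : redRatio R N = 1/((C.card:ℚ)+1) := by
            rw [redRatio_red1 hNr1, hcastN]
          have hbound : redRatio R N ≤ 1/2 := by
            rw [hθN]; exact q_le_half (by linarith)
          refine ⟨⟨fun _ => ⟨by omega, by omega, Or.inl hNr1⟩, ?_, fun h1 _ => by omega⟩,
            fun hh => absurd hh hiR, fun _ => hbound⟩
          intro _ _ d hd y hy hyge
          have hdC : d ∈ C := Finset.mem_of_mem_inter_right (by rwa [hNr] at hd)
          have hcons' := hconsent d hdC
          have hthr : 1/((N.card:ℚ)-1) = redRatio R C := by
            rw [hθC, hcastN]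
            norm_num
          rw [hthr] at hyge
          rcases eq_or_lt_of_le hyge with he | hlt
          · rw [← he]; exact hcons'
          · have hNClt : redRatio R N < redRatio R C := by
              rw [hθC, hθN]
              exact q_red_lt (by linarith)
            have hpd : p d < redRatio R C :=
              peak_lt (hwo d) (hstrict d) (hsp d) (hpeak d).1 (hpeak d).2 hNmem hCmem hcons' hNClt
            exact pref_trans (hwo d) hNmem hCmem hy hcons'
              (pref_above (hwo d) (hstrict d) (hsp d) (hpeak d).1 (hpeak d).2 hCmem hy
                (le_of_lt hpd) hlt)
        · -- contradiction: a blue agent cannot join a one-blue coalition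
          exfalso
          have hb1 : (C \ R).card = 1 := by
            rcases hdisj with hh | hh
            · exact absurd hh hr1
            · exact hh
          have hs3 : 3 ≤ C.card := by omega
          have hsCQ3 : (3:ℚ) ≤ (C.card:ℚ) := by exact_mod_cast hs3
          obtain ⟨d, hd⟩ := Finset.card_eq_one.mp hb1
          have hdmem : d ∈ C \ R := by rw [hd]; exact Finset.mem_singleton_self d
          have hdC : d ∈ C := (Finset.mem_sdiff.mp hdmem).1
          have hGd : GoodCo R rp C := by have := hI d; rwa [(hmemC d hdC).1] at this
          have hθC : redRatio R C = ((C.card:ℚ)-1)/(C.card:ℚ) := redRatio_blue1 hb1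
          have hrcval : (R ∩ C).card = C.card - 1 := by omega
          have hNrc : (R ∩ N).card = C.card - 1 := by
            rw [hNins, inter_insert_notmem hiR, hrcval]
          have hθN : redRatio R N = ((C.card:ℚ)-1)/((C.card:ℚ)+1) := by
            unfold redRatio
            rw [hNrc, Nat.cast_sub (by omega), hcastN]
            norm_num
          have hlock := hGd.2.2 hb1 hs3 d hdmem (redRatio R N) hNmem
            (by rw [hθN]; exact q_bound_blue hsCQ3)
          have heq := hstrict d (redRatio R N) hNmem (redRatio R C) hCmem (hconsent d hdC) hlock
          rw [hθN, hθC] at heq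
          exact q_ne_blue hsCQ3 heq
  have hGoodO' : GoodCo R rp (O.erase i) := by
    have hsO' : (O.erase i).card = O.card - 1 := Finset.card_erase_of_mem hiO
    rcases Nat.lt_or_ge O.card 3 with hsO2 | hsO3
    · exact good_small (by omega)
    have hGO : GoodCo R rp O := hI i
    obtain ⟨hrO1, hbO1, hdisjO⟩ := hGO.1 (by omega)
    have hsplitO := card_split R O
    have hsplitO' := card_split R (O.erase i)
    have hOne : O.Nonempty := ⟨i, hiO⟩
    have hOmemRS : redRatio R O ∈ RatioSet R.card (Fintype.card A) := redRatio_mem R O hOne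
    have hnO : O.card ≤ Fintype.card A := Finset.card_le_univ O
    have hsOQ : (3:ℚ) ≤ (O.card:ℚ) := by exact_mod_cast hsO3
    rcases hdisjO with hr1 | hb1
    · by_cases hiR : i ∈ R
      · -- the unique red of O cannot move at all
        exfalso
        have hidm : i ∈ R ∩ O := Finset.mem_inter.mpr ⟨hiR, hiO⟩
        have hbd : 1/((O.card:ℚ)-1) ≤ redRatio R N := by
          have h12 := hmainN.2.1 hiR
          have h13 : 1/((O.card:ℚ)-1) ≤ 1/2 := by
            rw [div_le_div_iff₀ (by linarith) (by norm_num)]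
            linarith
          linarith
        exact hstr'.2 (hGO.2.1 hr1 (by omega) i hidm (redRatio R N) hNmem hbd)
      · -- a blue agent left a one-red coalition
        have hiRO : i ∉ R ∩ O := fun hh => hiR (Finset.mem_of_mem_inter_left hh)
        have hiOR : i ∈ O \ R := Finset.mem_sdiff.mpr ⟨hiO, hiR⟩
        have hrO' : R ∩ O.erase i = R ∩ O := by
          rw [inter_erase', Finset.erase_eq_of_notMem hiRO]
        have hbO' : (O.erase i \ R).card = (O \ R).card - 1 := by
          rw [sdiff_erase', Finset.card_erase_of_mem hiOR]
        have hrO'1 : (R ∩ O.erase i).card = 1 := by rw [hrO']; exact hr1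
        refine ⟨fun _ => ⟨by omega, by omega, Or.inl hrO'1⟩, ?_, fun hb h3 => by omega⟩
        intro _ h3 d hd y hy hyge
        have h4 : 4 ≤ O.card := by omega
        have hdO : d ∈ R ∩ O := by rwa [hrO'] at hd
        have h1R : 1 ≤ R.card := by
          have hle : (R ∩ O).card ≤ R.card := Finset.card_le_card Finset.inter_subset_left
          omega
        have hy0mem : (1:ℚ)/((O.card:ℚ)-1) ∈ RatioSet R.card (Fintype.card A) := by
          refine ⟨1, O.card - 1, h1R, by omega, by omega, ?_⟩
          rw [Nat.cast_sub (by omega)]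
          norm_num
        have hlock := hGO.2.1 hr1 (by omega) d hdO (1/((O.card:ℚ)-1)) hy0mem (le_refl _)
        have hθO : redRatio R O = 1/(O.card:ℚ) := redRatio_red1 hr1
        rw [hθO] at hlock
        have hlt1 : (1:ℚ)/(O.card:ℚ) < 1/((O.card:ℚ)-1) :=
          q_inv_lt (by linarith) (by linarith)
        have hpd : p d < 1/((O.card:ℚ)-1) := by
          refine peak_lt (hwo d) (hstrict d) (hsp d) (hpeak d).1 (hpeak d).2 ?_ hy0mem hlock hlt1
          rw [← hθO]; exact hOmemRS
        have hθO' : redRatio R (O.erase i) = 1/((O.card:ℚ)-1) := by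
          rw [redRatio_red1 hrO'1, hsO', Nat.cast_sub (by omega)]
          norm_num
        rw [hθO']
        refine pref_above (hwo d) (hstrict d) (hsp d) (hpeak d).1 (hpeak d).2 hy0mem hy
          (le_of_lt hpd) ?_
        have hc : ((O.erase i).card : ℚ) = (O.card:ℚ) - 1 := by
          rw [hsO', Nat.cast_sub (by omega)]
          norm_num
        have hc2 : (O.card:ℚ)-1-1 = (O.card:ℚ)-2 := by ring
        rw [hc, hc2] at hyge
        have hsOQ4 : (4:ℚ) ≤ (O.card:ℚ) := by exact_mod_cast h4
        have h5 : (1:ℚ)/((O.card:ℚ)-1) < 1/((O.card:ℚ)-2) :=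
          q_inv_lt (by linarith) (by linarith)
        linarith
    · by_cases hiR : i ∈ R
      · -- a red agent left a one-blue coalition
        have hiOR : i ∉ O \ R := fun hh => (Finset.mem_sdiff.mp hh).2 hiR
        have hbO'eq : O.erase i \ R = O \ R := by
          rw [sdiff_erase', Finset.erase_eq_of_notMem hiOR]
        have hrO'c : (R ∩ O.erase i).card = (R ∩ O).card - 1 := by
          rw [inter_erase', Finset.card_erase_of_mem (Finset.mem_inter.mpr ⟨hiR, hiO⟩)]
        have hbO'1 : (O.erase i \ R).card = 1 := by rw [hbO'eq]; exact hb1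
        refine ⟨fun _ => ⟨by omega, by omega, Or.inr hbO'1⟩, fun hr h3 => by omega, ?_⟩
        intro _ h3 d hd y hy hyle
        have h4 : 4 ≤ O.card := by omega
        have hdO : d ∈ O \ R := by rwa [hbO'eq] at hd
        have hRO : O.card - 1 ≤ R.card := by
          have hle : (R ∩ O).card ≤ R.card := Finset.card_le_card Finset.inter_subset_left
          omega
        have hy0eq : (1:ℚ) - 1/((O.card:ℚ)-1) = ((O.card:ℚ)-2)/((O.card:ℚ)-1) := by
          have hne : (O.card:ℚ) - 1 ≠ 0 := by linarith
          field_simp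
          ring
        have hy0mem : (1:ℚ) - 1/((O.card:ℚ)-1) ∈ RatioSet R.card (Fintype.card A) := by
          refine ⟨O.card - 2, O.card - 1, by omega, by omega, by omega, ?_⟩
          rw [hy0eq, Nat.cast_sub (by omega), Nat.cast_sub (by omega)]
          norm_num
        have hlock := hGO.2.2 hb1 (by omega) d hdO (1 - 1/((O.card:ℚ)-1)) hy0mem (le_refl _)
        have hθO : redRatio R O = ((O.card:ℚ)-1)/(O.card:ℚ) := redRatio_blue1 hb1
        rw [hθO] at hlock
        have hlt1 : (1:ℚ) - 1/((O.card:ℚ)-1) < ((O.card:ℚ)-1)/(O.card:ℚ) := q_blue_lt2 hsOQ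
        have hpd : 1 - 1/((O.card:ℚ)-1) < p d := by
          refine lt_peak (hwo d) (hstrict d) (hsp d) (hpeak d).1 (hpeak d).2 ?_ hy0mem hlock hlt1
          rw [← hθO]; exact hOmemRS
        have hθO' : redRatio R (O.erase i) = ((O.card:ℚ)-2)/((O.card:ℚ)-1) := by
          have hb2 : (O.erase i \ R).card = 1 := hbO'1
          rw [redRatio_blue1 hb2, hsO', Nat.cast_sub (by omega)]
          ring_nf
        rw [hθO', ← hy0eq]
        refine pref_below (hwo d) (hstrict d) (hsp d) (hpeak d).1 (hpeak d).2 hy0mem hy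
          (le_of_lt hpd) ?_
        have hc : ((O.erase i).card : ℚ) = (O.card:ℚ) - 1 := by
          rw [hsO', Nat.cast_sub (by omega)]
          norm_num
        have hc2 : (O.card:ℚ)-1-1 = (O.card:ℚ)-2 := by ring
        rw [hc, hc2] at hyle
        have hsOQ4 : (4:ℚ) ≤ (O.card:ℚ) := by exact_mod_cast h4
        have h5 := q_blue_chain (s := (O.card:ℚ)) hsOQ4
        rw [← hy0eq] at h5
        linarith
      · -- the unique blue of O cannot move at all
        exfalso
        have hidm : i ∈ O \ R := Finset.mem_sdiff.mpr ⟨hiO, hiR⟩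
        have hbd : redRatio R N ≤ 1 - 1/((O.card:ℚ)-1) := by
          have h12 := hmainN.2.2 hiR
          have h13 : 1/((O.card:ℚ)-1) ≤ 1/2 := by
            rw [div_le_div_iff₀ (by linarith) (by norm_num)]
            linarith
          linarith
        exact hstr'.2 (hGO.2.2 hb1 (by omega) i hidm (redRatio R N) hNmem hbd)
  intro a
  by_cases haN : a ∈ N
  · have : π' a = N := hπ'.2 a i haN
    rw [this]
    exact hmainN.1
  by_cases haO : a ∈ O
  · have hai : a ≠ i := fun h => haN (h ▸ hiN)
    rw [hOmem a haO hai]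
    exact hGoodO'
  · rw [hunch a haN haO]
    exact hI a

end HDGStep
set_option linter.unusedSectionVars false in
lemma inv_singletons {A : Type} [Fintype A] [DecidableEq A]
    (R : Finset A) (rp : A → ℚ → ℚ → Prop) :
    InvP R rp (fun a => ({a} : Finset A)) := fun _ => good_small (by simp)

lemma part_singletons {A : Type} [DecidableEq A] :
    IsPartition (fun a : A => ({a} : Finset A)) :=
  ⟨fun i => Finset.mem_singleton_self i, fun i j h => by
    simp only [Finset.mem_singleton] at h
    rw [h]⟩

set_option linter.unusedSectionVars false in
lemma T1T2_of_inv {A : Type} [Fintype A] [DecidableEq A]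
    (R : Finset A) (rp : A → ℚ → ℚ → Prop)
    (hwo : ∀ i, WeakOrderOn (rp i) (RatioSet R.card (Fintype.card A)))
    (hstrict : ∀ i, StrictPrefsOn (rp i) (RatioSet R.card (Fintype.card A)))
    (hsp : ∀ i, SinglePeakedOn (rp i) (RatioSet R.card (Fintype.card A)))
    (p : A → ℚ)
    (hpeak : ∀ i, p i ∈ RatioSet R.card (Fintype.card A) ∧
      ∀ x ∈ RatioSet R.card (Fintype.card A), rp i (p i) x)
    (π : A → Finset A) (hπ : IsPartition π) (hI : InvP R rp π) :
    (∀ x ∈ R, (1:ℚ)/2 ≤ p x → (1:ℚ)/2 ≤ redRatio R (π x)) ∧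
    (∀ b : A, b ∉ R → p b ≤ (1:ℚ)/2 → redRatio R (π b) ≤ (1:ℚ)/2) := by
  constructor
  · intro x hxR hpx
    have hxC : x ∈ π x := hπ.1 x
    have hne : (π x).Nonempty := ⟨x, hxC⟩
    have hsplit := card_split R (π x)
    have hxRC : x ∈ R ∩ π x := Finset.mem_inter.mpr ⟨hxR, hxC⟩
    have hr1le : 1 ≤ (R ∩ π x).card := Finset.card_pos.mpr ⟨x, hxRC⟩
    have hCmem := redRatio_mem R (π x) hne
    rcases Nat.lt_or_ge (π x).card 2 with h1 | h2
    · have hs1 : (π x).card = 1 := by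
        have := Finset.card_pos.mpr hne
        omega
      have hrc : (R ∩ π x).card = 1 := by
        have hle : (R ∩ π x).card ≤ (π x).card := Finset.card_le_card Finset.inter_subset_right
        omega
      rw [redRatio_red1 hrc, hs1]
      norm_num
    · obtain ⟨-, hb1le, hdisj⟩ := (hI x).1 h2
      rcases hdisj with hr1 | hb1
      · rcases Nat.lt_or_ge (π x).card 3 with h3 | h3
        · have hs2 : (π x).card = 2 := by omega
          rw [redRatio_red1 hr1, hs2]
          norm_num
        · exfalso
          have hsQ : (3:ℚ) ≤ ((π x).card : ℚ) := by exact_mod_cast h3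
          have hhalf : (1:ℚ)/2 ∈ RatioSet R.card (Fintype.card A) := by
            refine ⟨1, 2, Finset.card_pos.mpr ⟨x, hxR⟩, by norm_num, ?_, by norm_num⟩
            have := Finset.card_le_univ (π x)
            omega
          have hlock := (hI x).2.1 hr1 h3 x hxRC (1/2) hhalf
            (by rw [div_le_div_iff₀ (by linarith) (by norm_num)]; linarith)
          have hθ : redRatio R (π x) = 1/((π x).card:ℚ) := redRatio_red1 hr1
          have hlt : (1:ℚ)/((π x).card:ℚ) < 1/2 := by
            rw [div_lt_div_iff₀ (by linarith) (by norm_num)]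
            linarith
          have hother : rp x (1/2) (redRatio R (π x)) :=
            pref_below (hwo x) (hstrict x) (hsp x) (hpeak x).1 (hpeak x).2 hhalf hCmem hpx
              (by rw [hθ]; exact hlt)
          have heq := hstrict x (redRatio R (π x)) hCmem (1/2) hhalf hlock hother
          rw [hθ] at heq
          exact (ne_of_lt hlt) heq
      · rw [redRatio_blue1 hb1]
        exact q_half_le (by exact_mod_cast h2)
  · intro b hbR hpb
    have hbC : b ∈ π b := hπ.1 b
    have hne : (π b).Nonempty := ⟨b, hbC⟩
    have hsplit := card_split R (π b)
    have hbCR : b ∈ (π b) \ R := Finset.mem_sdiff.mpr ⟨hbC, hbR⟩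
    have hb1le : 1 ≤ ((π b) \ R).card := Finset.card_pos.mpr ⟨b, hbCR⟩
    have hCmem := redRatio_mem R (π b) hne
    rcases Nat.lt_or_ge (π b).card 2 with h1 | h2
    · have hs1 : (π b).card = 1 := by
        have := Finset.card_pos.mpr hne
        omega
      have hrc : (R ∩ π b).card = 0 := by omega
      unfold redRatio
      rw [hrc]
      norm_num
    · obtain ⟨hr1le, -, hdisj⟩ := (hI b).1 h2
      have hsQ2 : (2:ℚ) ≤ ((π b).card : ℚ) := by exact_mod_cast h2
      rcases hdisj with hr1 | hb1
      · rw [redRatio_red1 hr1]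
        exact q_le_half hsQ2
      · rcases Nat.lt_or_ge (π b).card 3 with h3 | h3
        · have hs2 : (π b).card = 2 := by omega
          rw [redRatio_blue1 hb1, hs2]
          norm_num
        · exfalso
          have hsQ : (3:ℚ) ≤ ((π b).card : ℚ) := by exact_mod_cast h3
          have hR1 : 1 ≤ R.card := by
            have hle : (R ∩ π b).card ≤ R.card := Finset.card_le_card Finset.inter_subset_left
            omega
          have hhalf : (1:ℚ)/2 ∈ RatioSet R.card (Fintype.card A) := by
            refine ⟨1, 2, hR1, by norm_num, ?_, by norm_num⟩
            have := Finset.card_le_univ (π b)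
            omega
          have hlock := (hI b).2.2 hb1 h3 b hbCR (1/2) hhalf
            (by
              have h13 : 1/(((π b).card:ℚ)-1) ≤ 1/2 := by
                rw [div_le_div_iff₀ (by linarith) (by norm_num)]
                linarith
              linarith)
          have hθ : redRatio R (π b) = (((π b).card:ℚ)-1)/((π b).card:ℚ) := redRatio_blue1 hb1
          have hlt : (1:ℚ)/2 < (((π b).card:ℚ)-1)/((π b).card:ℚ) := by
            rw [div_lt_div_iff₀ (by norm_num) (by linarith)]
            linarith
          have hother : rp b (1/2) (redRatio R (π b)) :=
            pref_above (hwo b) (hstrict b) (hsp b) (hpeak b).1 (hpeak b).2 hhalf hCmem hpb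
              (by rw [hθ]; exact hlt)
          have heq := hstrict b (redRatio R (π b)) hCmem (1/2) hhalf hlock hother
          rw [hθ] at heq
          exact (ne_of_gt hlt) heq
/-- Along any solitary-homogeneous IS dynamics starting from the singleton
partition in a hedonic diversity game with strict and naturally single-peaked
preferences, every red agent with peak at least `1/2` is always in a coalition
of red ratio at least `1/2`, and every blue agent with peak at most `1/2` is
always in a coalition of red ratio at most `1/2`. -/
theorem hdg_dynamics_peak_half
    (A : Type) [Fintype A] [DecidableEq A]
    (R : Finset A) (rp : A → ℚ → ℚ → Prop)
    (hwo : ∀ i, WeakOrderOn (rp i) (RatioSet R.card (Fintype.card A)))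
    (hstrict : ∀ i, StrictPrefsOn (rp i) (RatioSet R.card (Fintype.card A)))
    (hsp : ∀ i, SinglePeakedOn (rp i) (RatioSet R.card (Fintype.card A)))
    (p : A → ℚ)
    (hpeak : ∀ i, p i ∈ RatioSet R.card (Fintype.card A) ∧
      ∀ x ∈ RatioSet R.card (Fintype.card A), rp i (p i) x)
    (K : ℕ) (seq : ℕ → A → Finset A)
    (h0 : seq 0 = fun a => {a})
    (hstep : ∀ k < K, ISStepSH R rp (seq k) (seq (k + 1))) :
    ∀ k ≤ K,
      (∀ r ∈ R, (1 : ℚ) / 2 ≤ p r → (1 : ℚ) / 2 ≤ redRatio R (seq k r)) ∧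
      (∀ b : A, b ∉ R → p b ≤ (1 : ℚ) / 2 → redRatio R (seq k b) ≤ (1 : ℚ) / 2) := by
  have hinv : ∀ m, m ≤ K → InvP R rp (seq m) := by
    intro m
    induction m with
    | zero =>
      intro _
      rw [h0]
      exact inv_singletons R rp
    | succ t ih =>
      intro hms
      exact step_inv R rp hwo hstrict hsp p hpeak (seq t) (seq (t+1))
        (hstep t (by omega)) (ih (by omega))
  intro k hk
  have hpartk : IsPartition (seq k) := by
    cases k with
    | zero =>
      rw [h0]
      exact part_singletons
    | succ t => exact (hstep t (by omega)).2.1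
  exact T1T2_of_inv R rp hwo hstrict hsp p hpeak (seq k) hpartk (hinv k hk)
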